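/- Let (V, E, V_□, V_◇, w) be a finite arena with integer payoffs w : E → ℤ, let λ ∈ ℤ, let W_λ = max_{e ∈ E} |w(e) − λ| (equal to the maximum absolute payoff when λ = 0), and let ℓ' = |V|·(|V|·W_λ + 1). Then for every vertex v ∈ V, Player 1 sure-wins DirBWMP(λ) from v if and only if Player 1 sure-wins DirFWMP(ℓ', λ) from v. -/

import Mathlib

open scoped Classical

/-- A finite arena with integer payoffs: a deadlock-free edge relation `E`, a
set `P1` of Player-1 vertices (the probabilistic vertices `V_◇` form the
complement of `P1`), and an integer payoff `w` on edges. -/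
structure ArenaZ (V : Type*) where
  E : V → V → Prop
  P1 : Set V
  w : V → V → ℤ
  nodeadlock : ∀ v : V, ∃ u : V, E v u

/-- A play is an infinite `E`-path. -/
def ArenaZ.IsPlay {V : Type*} (A : ArenaZ V) (π : ℕ → V) : Prop :=
  ∀ n : ℕ, A.E (π n) (π (n + 1))

/-- A strategy for Player 1: given the history (the strict prefix `v_0 … v_{n-1}`
of the current play) and the current vertex `v_n`, if `v_n` belongs to Player 1
then the strategy picks an out-neighbour of `v_n`. -/
structure ArenaZ.Strategy {V : Type*} (A : ArenaZ V) where
  act : List V → V → V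
  legal : ∀ (h : List V) (v : V), v ∈ A.P1 → A.E v (act h v)

/-- `π` is an outcome of strategy `σ` from `v`. -/
def ArenaZ.IsOutcome {V : Type*} (A : ArenaZ V) (σ : A.Strategy) (v : V) (π : ℕ → V) : Prop :=
  π 0 = v ∧ A.IsPlay π ∧
    ∀ n : ℕ, π n ∈ A.P1 → π (n + 1) = σ.act (List.ofFn fun i : Fin n => π i) (π n)

/-- Player 1 sure-wins objective `Φ` from `v`: some strategy has all of its
outcomes from `v` inside `Φ`. -/
def ArenaZ.SureWins {V : Type*} (A : ArenaZ V) (Φ : Set (ℕ → V)) (v : V) : Prop :=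
  ∃ σ : A.Strategy, ∀ π : ℕ → V, A.IsOutcome σ v π → π ∈ Φ

/-- Total payoff of the window of length `d` starting at position `i` of play `π`. -/
def ArenaZ.winSum {V : Type*} (A : ArenaZ V) (π : ℕ → V) (i d : ℕ) : ℤ :=
  ∑ k ∈ Finset.range d, A.w (π (i + k)) (π (i + k + 1))

/-- `π` satisfies `DirFWMP(ℓ, λ)`: every `λ`-window closes within `ℓ` steps. -/
def ArenaZ.DirFWMP {V : Type*} (A : ArenaZ V) (ℓ : ℕ) (lam : ℤ) (π : ℕ → V) : Prop :=
  ∀ i : ℕ, ∃ d : ℕ, 1 ≤ d ∧ d ≤ ℓ ∧ lam * (d : ℤ) ≤ A.winSum π i d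

/-- `π` satisfies `DirBWMP(λ)`: it satisfies `DirFWMP(ℓ, λ)` for some `ℓ ≥ 1`. -/
def ArenaZ.DirBWMP {V : Type*} (A : ArenaZ V) (lam : ℤ) (π : ℕ → V) : Prop :=
  ∃ ℓ : ℕ, 1 ≤ ℓ ∧ A.DirFWMP ℓ lam π

/-- `W_λ = max_{e ∈ E} |w(e) − λ|`, the maximum absolute deviation of an edge
payoff from `λ` (for `λ = 0` this is the maximum absolute payoff `w_max`). -/
noncomputable def ArenaZ.maxDev {V : Type*} [Fintype V] (A : ArenaZ V) (lam : ℤ) : ℕ :=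
  Finset.univ.sup fun e : V × V => if A.E e.1 e.2 then (A.w e.1 e.2 - lam).natAbs else 0

set_option linter.unusedSectionVars false

section WMPProof
variable {V : Type*} [Fintype V] [Nonempty V] (A : ArenaZ V) (lam : ℤ)

namespace WMP
variable {V : Type*} [Fintype V] [Nonempty V] (A : ArenaZ V) (lam : ℤ)

/-- adjusted weight -/
def wm (u v : V) : ℤ := A.w u v - lam

/-- winning region of DirBWMP -/
def X : Set V := {u | A.SureWins {π : ℕ → V | A.DirBWMP lam π} u}

/-- adjusted sum over [s, n) -/
def adjP (π : ℕ → V) (s n : ℕ) : ℤ := ∑ k ∈ Finset.Ico s n, wm A lam (π k) (π (k + 1))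

lemma adjP_succ (π : ℕ → V) {s n : ℕ} (h : s ≤ n) :
    adjP A lam π s (n + 1) = adjP A lam π s n + wm A lam (π n) (π (n + 1)) := by
  unfold adjP
  rw [Finset.sum_Ico_succ_top h]

lemma adjP_eq (π : ℕ → V) (i d : ℕ) :
    adjP A lam π i (i + d) = A.winSum π i d - lam * d := by
  induction d with
  | zero => simp [adjP, ArenaZ.winSum]
  | succ d ih =>
      rw [← add_assoc, adjP_succ A lam π (by omega)]
      simp [ArenaZ.winSum, Finset.sum_range_succ, ih, wm]
      ring

lemma edge_wm_bound {u v : V} (h : A.E u v) :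
    -(A.maxDev lam : ℤ) ≤ wm A lam u v ∧ wm A lam u v ≤ (A.maxDev lam : ℤ) := by
  have h1 : (A.w u v - lam).natAbs ≤ A.maxDev lam := by
    have := Finset.le_sup (f := fun e : V × V => if A.E e.1 e.2 then (A.w e.1 e.2 - lam).natAbs else 0)
      (Finset.mem_univ (u, v))
    simp [h] at this
    exact this
  have h2 : |wm A lam u v| ≤ (A.maxDev lam : ℤ) := by
    rw [Int.abs_eq_natAbs]
    exact_mod_cast h1
  constructor <;> [exact neg_le_of_abs_le h2; exact le_of_abs_le h2]

/-- `Reach k u c`: Player 1 can force, within `k` steps, the adjusted running sum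
to gain at least `c`, while staying in the winning region `X`. -/
def Reach : ℕ → V → ℤ → Prop
  | 0, _, c => c ≤ 0
  | (k + 1), u, c => c ≤ 0 ∨
      (if u ∈ A.P1 then
        ∃ v : V, A.E u v ∧ v ∈ X A lam ∧ Reach k v (c - wm A lam u v)
      else
        ∀ v : V, A.E u v → Reach k v (c - wm A lam u v))

lemma Reach_succ (k : ℕ) (u : V) (c : ℤ) : Reach A lam (k + 1) u c ↔ (c ≤ 0 ∨
      (if u ∈ A.P1 then
        ∃ v : V, A.E u v ∧ v ∈ X A lam ∧ Reach A lam k v (c - wm A lam u v)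
      else
        ∀ v : V, A.E u v → Reach A lam k v (c - wm A lam u v))) := Iff.rfl

lemma Reach_step {k : ℕ} {u : V} {c : ℤ} (h : Reach A lam k u c) :
    Reach A lam (k + 1) u c := by
  induction k generalizing u c with
  | zero => exact Or.inl h
  | succ m ih =>
      rw [Reach_succ] at h ⊢
      rcases h with hc | h
      · exact Or.inl hc
      · by_cases hP : u ∈ A.P1
        · rw [if_pos hP] at h ⊢
          obtain ⟨v, hE, hX, hR⟩ := h
          exact Or.inr ⟨v, hE, hX, ih hR⟩
        · rw [if_neg hP] at h ⊢
          exact Or.inr fun v hE => ih (h v hE)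

lemma Reach_mono_k {k k' : ℕ} (hk : k ≤ k') {u : V} {c : ℤ} (h : Reach A lam k u c) :
    Reach A lam k' u c := by
  induction hk with
  | refl => exact h
  | step _ ih => exact Reach_step A lam ih

lemma Reach_mono_c {k : ℕ} {u : V} {c c' : ℤ} (hc : c ≤ c') (h : Reach A lam k u c') :
    Reach A lam k u c := by
  induction k generalizing u c c' with
  | zero => exact le_trans hc h
  | succ k ih =>
      rcases h with h0 | h
      · exact Or.inl (le_trans hc h0)
      · by_cases hP : u ∈ A.P1
        · rw [if_pos hP] at h
          obtain ⟨v, hE, hX, hR⟩ := h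
          exact Or.inr (by rw [if_pos hP]; exact ⟨v, hE, hX, ih (by omega) hR⟩)
        · rw [if_neg hP] at h
          exact Or.inr (by rw [if_neg hP]; exact fun v hE => ih (by omega) (h v hE))

def hasReach (u : V) (c : ℤ) : Prop := ∃ k, Reach A lam k u c

noncomputable def Tm (u : V) (c : ℤ) : ℕ :=
  if h : hasReach A lam u c then Nat.find h else 0

lemma Tm_spec {u : V} {c : ℤ} (h : hasReach A lam u c) : Reach A lam (Tm A lam u c) u c := by
  rw [Tm, dif_pos h]; exact Nat.find_spec h

lemma Tm_le {u : V} {c : ℤ} {k : ℕ} (h : Reach A lam k u c) : Tm A lam u c ≤ k := by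
  have hh : hasReach A lam u c := ⟨k, h⟩
  rw [Tm, dif_pos hh]; exact Nat.find_le h

lemma Tm_min {u : V} {c : ℤ} (h : hasReach A lam u c) {k : ℕ} (hk : k < Tm A lam u c) :
    ¬ Reach A lam k u c := by
  rw [Tm, dif_pos h] at hk; exact Nat.find_min h hk

lemma Tm_pos {u : V} {c : ℤ} (h : hasReach A lam u c) (hc : 1 ≤ c) : 1 ≤ Tm A lam u c := by
  by_contra hx
  have h0 : Tm A lam u c = 0 := by omega
  have := Tm_spec A lam h
  rw [h0] at this
  exact absurd this (by simp [Reach]; omega)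

end WMP

end WMPProof

section Part2
variable {V : Type*} [Fintype V] [Nonempty V] (A : ArenaZ V) (lam : ℤ)
namespace WMP

/-- a finite `σ`-consistent path of length `m` from `x` -/
def ConsPath (σ : A.Strategy) (x : V) (m : ℕ) (p : ℕ → V) : Prop :=
  p 0 = x ∧ (∀ n < m, A.E (p n) (p (n + 1))) ∧
    (∀ n < m, p n ∈ A.P1 → p (n + 1) = σ.act (List.ofFn fun i : Fin n => p i) (p n))

lemma mem_X_of_consPath (σ : A.Strategy) (x : V)
    (hσ : ∀ π : ℕ → V, A.IsOutcome σ x π → A.DirBWMP lam π)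
    {m : ℕ} {p : ℕ → V} (hp : ConsPath A σ x m p) : p m ∈ X A lam := by
  obtain ⟨hp0, hpe, hpc⟩ := hp
  set pref : List V := List.ofFn fun i : Fin m => p i with hpref
  refine ⟨⟨fun h u => σ.act (pref ++ h) u, fun h u hu => σ.legal _ u hu⟩, ?_⟩
  intro π' hπ'
  obtain ⟨hπ'0, hπ'play, hπ'cons⟩ := hπ'
  set π : ℕ → V := fun n => if n < m then p n else π' (n - m) with hπdef
  have hsuf : ∀ j, π (m + j) = π' j := by
    intro j
    simp only [hπdef]
    rw [if_neg (by omega)]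
    congr 1
    omega
  have hpre : ∀ j, j < m → π j = p j := by
    intro j hj; simp only [hπdef, if_pos hj]
  have hπm : ∀ j, j ≤ m → π j = p j := by
    intro j hj
    rcases Nat.lt_or_ge j m with h | h
    · exact hpre j h
    · have : j = m := by omega
      subst this
      have := hsuf 0
      simpa [hπ'0] using this
  have hout : A.IsOutcome σ x π := by
    refine ⟨by rw [hπm 0 (by omega), hp0], ?_, ?_⟩
    · intro n
      rcases Nat.lt_or_ge n m with h | h
      · rw [hπm n (by omega), hπm (n+1) (by omega)]
        exact hpe n h
      · obtain ⟨k, rfl⟩ := Nat.exists_eq_add_of_le h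
        rw [hsuf k, show m + k + 1 = m + (k+1) by omega, hsuf (k+1)]
        exact hπ'play k
    · intro n hn
      rcases Nat.lt_or_ge n m with h | h
      · rw [hπm (n+1) (by omega)]
        rw [hπm n (by omega)] at hn ⊢
        rw [hpc n h hn]
        congr 1
        exact congrArg List.ofFn (funext fun i => (hpre i (Nat.lt_trans i.isLt h)).symm)
      · obtain ⟨k, rfl⟩ := Nat.exists_eq_add_of_le h
        rw [hsuf k] at hn
        rw [show m + k + 1 = m + (k+1) by omega, hsuf (k+1), hsuf k, hπ'cons k hn]
        show σ.act (pref ++ _) _ = _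
        congr 1
        rw [List.ofFn_add (f := fun i : Fin (m + k) => π i)]
        congr 1
        · refine congrArg List.ofFn (funext fun i => ?_)
          have : ((Fin.castLE (by omega) i : Fin (m+k)) : ℕ) = (i : ℕ) := rfl
          rw [this, hπm i (Nat.le_of_lt i.isLt)]
        · refine congrArg List.ofFn (funext fun j => ?_)
          have : ((Fin.natAdd m j : Fin (m+k)) : ℕ) = m + (j : ℕ) := rfl
          rw [this, hsuf j]
  obtain ⟨ℓ, hℓ1, hℓ⟩ := hσ π hout
  refine ⟨ℓ, hℓ1, fun i => ?_⟩
  obtain ⟨d, hd1, hdℓ, hdw⟩ := hℓ (m + i)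
  refine ⟨d, hd1, hdℓ, ?_⟩
  have : A.winSum π (m + i) d = A.winSum π' i d := by
    unfold ArenaZ.winSum
    refine Finset.sum_congr rfl fun k _ => ?_
    rw [show m + i + k = m + (i + k) by omega, hsuf (i+k),
      show m + (i+k) + 1 = m + (i + k + 1) by omega, hsuf (i+k+1)]
  rwa [this] at hdw

lemma outcome_mem_X (σ : A.Strategy) (x : V)
    (hσ : ∀ π : ℕ → V, A.IsOutcome σ x π → A.DirBWMP lam π)
    {π : ℕ → V} (hπ : A.IsOutcome σ x π) (n : ℕ) : π n ∈ X A lam := by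
  obtain ⟨h0, hplay, hcons⟩ := hπ
  exact mem_X_of_consPath A lam σ x hσ ⟨h0, fun k _ => hplay k, fun k _ h => hcons k h⟩

lemma succ_mem_X {u v' : V} (hu : u ∈ X A lam) (hP : u ∉ A.P1) (hE : A.E u v') :
    v' ∈ X A lam := by
  obtain ⟨σ, hσ⟩ := hu
  have := mem_X_of_consPath A lam σ u hσ (m := 1) (p := fun n => if n = 0 then u else v')
    ⟨by simp, ?_, ?_⟩
  · simpa using this
  · intro n hn
    have : n = 0 := by omega
    subst this; simpa using hE
  · intro n hn h1
    have : n = 0 := by omega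
    subst this
    simp at h1
    exact absurd h1 hP

end WMP
end Part2

section Part3
variable {V : Type*} [Fintype V] [Nonempty V] (A : ArenaZ V) (lam : ℤ)
namespace WMP

def extFun (h : List V) (x : V) : ℕ → V := fun i => h.getD i x

lemma extFun_ofFn (π : ℕ → V) (n : ℕ) :
    ∀ i ≤ n, extFun (List.ofFn fun j : Fin n => π j) (π n) i = π i := by
  intro i hi
  unfold extFun
  rcases Nat.lt_or_ge i n with h | h
  · rw [List.getD_eq_getElem _ _ (by simpa using h)]
    simp
  · have : i = n := by omega
    subst this
    rw [List.getD_eq_default _ _ (by simpa using h)]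

lemma adjP_congr {π₁ π₂ : ℕ → V} {n : ℕ} (h : ∀ i ≤ n, π₁ i = π₂ i)
    {s m : ℕ} (hm : m ≤ n) : adjP A lam π₁ s m = adjP A lam π₂ s m := by
  unfold adjP
  refine Finset.sum_congr rfl fun k hk => ?_
  have hk' : k < m := (Finset.mem_Ico.mp hk).2
  rw [h k (by omega), h (k+1) (by omega)]

/-- deficit computed from a history list and current vertex -/
def histDef (h : List V) (x : V) : ℤ := -(adjP A lam (extFun h x) 0 h.length)

lemma histDef_eq (π : ℕ → V) (n : ℕ) :
    histDef A lam (List.ofFn fun j : Fin n => π j) (π n) = -(adjP A lam π 0 n) := by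
  unfold histDef
  rw [adjP_congr A lam (extFun_ofFn π n) (by simp : (List.ofFn fun j : Fin n => π j).length ≤ n)]
  simp

/-- adversary's next move in the "bad play" construction -/
noncomputable def nxt (σ : A.Strategy) (h : List V) (x : V) (c : ℤ) : V :=
  if x ∈ A.P1 then σ.act h x
  else if hb : ∃ v', A.E x v' ∧ ¬ hasReach A lam v' (c - wm A lam x v') then hb.choose
  else (A.nodeadlock x).choose

noncomputable def bp (σ : A.Strategy) (u : V) : ℕ → V
  | 0 => u
  | n + 1 =>
      nxt A lam σ (List.ofFn fun i : Fin n => bp σ u i) (bp σ u n)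
        (histDef A lam (List.ofFn fun i : Fin n => bp σ u i) (bp σ u n))
  termination_by n => n
  decreasing_by
  all_goals first
    | exact Nat.lt_trans i.isLt (Nat.lt_succ_self n)
    | exact Nat.lt_succ_self n

lemma bp_zero (σ : A.Strategy) (u : V) : bp A lam σ u 0 = u := by rw [bp]

lemma bp_succ (σ : A.Strategy) (u : V) (n : ℕ) :
    bp A lam σ u (n+1) = nxt A lam σ (List.ofFn fun i : Fin n => bp A lam σ u i)
      (bp A lam σ u n) (-(adjP A lam (bp A lam σ u) 0 n)) := by
  rw [bp, histDef_eq]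

lemma nxt_edge (σ : A.Strategy) (h : List V) (x : V) (c : ℤ) :
    A.E x (nxt A lam σ h x c) := by
  unfold nxt
  by_cases hP : x ∈ A.P1
  · rw [if_pos hP]; exact σ.legal h x hP
  · rw [if_neg hP]
    by_cases hb : ∃ v', A.E x v' ∧ ¬ hasReach A lam v' (c - wm A lam x v')
    · rw [dif_pos hb]; exact hb.choose_spec.1
    · rw [dif_neg hb]; exact (A.nodeadlock x).choose_spec

lemma bp_outcome (σ : A.Strategy) (u : V) : A.IsOutcome σ u (bp A lam σ u) := by
  refine ⟨bp_zero A lam σ u, ?_, ?_⟩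
  · intro n
    rw [bp_succ]
    exact nxt_edge A lam σ _ _ _
  · intro n hn
    rw [bp_succ]
    unfold nxt
    rw [if_pos hn]

lemma bp_bad (σ : A.Strategy) (u : V)
    (hσ : ∀ π : ℕ → V, A.IsOutcome σ u π → A.DirBWMP lam π)
    (hbase : ¬ hasReach A lam (bp A lam σ u 1) (-(adjP A lam (bp A lam σ u) 0 1))) : False := by
  set π := bp A lam σ u with hπ
  have hout := bp_outcome A lam σ u
  have hX : ∀ n, π n ∈ X A lam := fun n => outcome_mem_X A lam σ u hσ hout n
  have hinv : ∀ n, 1 ≤ n → ¬ hasReach A lam (π n) (-(adjP A lam π 0 n)) := by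
    intro n
    induction n with
    | zero => omega
    | succ n ih =>
        intro _
        rcases Nat.lt_or_ge n 1 with h1 | h1
        · have : n = 0 := by omega
          subst this
          exact hbase
        · have ihn := ih h1
          have hstep : adjP A lam π 0 (n+1)
              = adjP A lam π 0 n + wm A lam (π n) (π (n+1)) :=
            adjP_succ A lam π (by omega)
          by_cases hP : π n ∈ A.P1
          · -- player 1 moves according to σ; next vertex is in X
            intro ⟨k, hk⟩
            apply ihn
            refine ⟨k + 1, Or.inr ?_⟩
            rw [if_pos hP]
            refine ⟨π (n+1), hout.2.1 n, hX (n+1), ?_⟩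
            rw [show -(adjP A lam π 0 n) - wm A lam (π n) (π (n+1))
              = -(adjP A lam π 0 (n+1)) by rw [hstep]; ring]
            exact hk
          · -- adversary moves: the bad successor exists
            have hb : ∃ v', A.E (π n) v' ∧
                ¬ hasReach A lam v' (-(adjP A lam π 0 n) - wm A lam (π n) v') := by
              by_contra hno
              push_neg at hno
              apply ihn
              set K := Finset.univ.sup fun v' : V =>
                Tm A lam v' (-(adjP A lam π 0 n) - wm A lam (π n) v') with hK
              refine ⟨K + 1, Or.inr ?_⟩
              rw [if_neg hP]
              intro v' hE
              exact Reach_mono_k A lam (Finset.le_sup (Finset.mem_univ v'))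
                (Tm_spec A lam (hno v' hE))
            have hnext : π (n + 1) = hb.choose := by
              have h1 := bp_succ A lam σ u n
              rw [← hπ] at h1
              unfold nxt at h1
              rw [if_neg hP, dif_pos hb] at h1
              exact h1
            intro hR
            apply hb.choose_spec.2
            rw [← hnext]
            rw [show -(adjP A lam π 0 n) - wm A lam (π n) (π (n+1))
              = -(adjP A lam π 0 (n+1)) by rw [hstep]; ring]
            exact hR
  obtain ⟨ℓ, hℓ1, hF⟩ := hσ π hout
  obtain ⟨d, hd1, hdℓ, hdw⟩ := hF 0
  apply hinv d hd1
  refine ⟨0, ?_⟩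
  show -(adjP A lam π 0 d) ≤ 0
  have := adjP_eq A lam π 0 d
  simp only [Nat.zero_add] at this
  omega

lemma comp1 {u : V} (hu : u ∈ X A lam) (hP : u ∈ A.P1) :
    ∃ v', A.E u v' ∧ v' ∈ X A lam ∧ hasReach A lam v' (-(wm A lam u v')) := by
  obtain ⟨σ, hσ⟩ := hu
  refine ⟨bp A lam σ u 1, ?_, ?_, ?_⟩
  · have := (bp_outcome A lam σ u).2.1 0
    rwa [bp_zero] at this
  · exact outcome_mem_X A lam σ u hσ (bp_outcome A lam σ u) 1
  · by_contra hno
    apply bp_bad A lam σ u hσ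
    have : adjP A lam (bp A lam σ u) 0 1 = wm A lam u (bp A lam σ u 1) := by
      rw [adjP_succ A lam _ (le_refl 0), bp_zero]
      simp [adjP]
    rwa [this]

lemma comp2 {u v₀ : V} (hu : u ∈ X A lam) (hP : u ∉ A.P1) (hE : A.E u v₀) :
    v₀ ∈ X A lam ∧ hasReach A lam v₀ (-(wm A lam u v₀)) := by
  refine ⟨succ_mem_X A lam hu hP hE, ?_⟩
  by_contra hno
  obtain ⟨σ, hσ⟩ := hu
  apply bp_bad A lam σ u hσ
  have hb : ∃ v', A.E u v' ∧
      ¬ hasReach A lam v' (-(adjP A lam (bp A lam σ u) 0 0) - wm A lam u v') := by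
    refine ⟨v₀, hE, ?_⟩
    have : adjP A lam (bp A lam σ u) 0 0 = 0 := by simp [adjP]
    rw [this]
    simpa using hno
  have h1 : bp A lam σ u 1 = hb.choose := by
    have h1 := bp_succ A lam σ u 0
    rw [bp_zero] at h1
    unfold nxt at h1
    rw [if_neg hP, dif_pos hb] at h1
    exact h1
  have h2 : adjP A lam (bp A lam σ u) 0 1 = wm A lam u (bp A lam σ u 1) := by
    rw [adjP_succ A lam _ (le_refl 0), bp_zero]
    simp [adjP]
  rw [h2, h1]
  have h0 : adjP A lam (bp A lam σ u) 0 0 = 0 := by simp [adjP]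
  have e : -wm A lam u hb.choose
      = -(adjP A lam (bp A lam σ u) 0 0) - wm A lam u hb.choose := by
    linarith [h0]
  rw [e]
  exact hb.choose_spec.2

end WMP
end Part3

section Part4
variable {V : Type*} [Fintype V] [Nonempty V] (A : ArenaZ V) (lam : ℤ)
namespace WMP

lemma one_le_of_Tm_pos {u : V} {c : ℤ} (h : hasReach A lam u c)
    (ht : 1 ≤ Tm A lam u c) : 1 ≤ c := by
  by_contra hc
  have h0 : Reach A lam 0 u c := by show c ≤ 0; omega
  have := Tm_le A lam h0
  omega

lemma exists_next {u : V} {c : ℤ} (h : hasReach A lam u c) (ht : 1 ≤ Tm A lam u c) :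
    ∃ v, A.E u v ∧ hasReach A lam v (c - wm A lam u v) ∧
      Tm A lam v (c - wm A lam u v) = Tm A lam u c - 1 := by
  set m := Tm A lam u c with hm
  obtain ⟨k, hk⟩ : ∃ k, m = k + 1 := ⟨m - 1, by omega⟩
  have hspec : Reach A lam (k + 1) u c := by rw [← hk]; exact Tm_spec A lam h
  have hc1 : 1 ≤ c := one_le_of_Tm_pos A lam h ht
  have hnot : ¬ Reach A lam k u c := Tm_min A lam h (by omega)
  rcases hspec with h0 | hspec
  · omega
  by_cases hP : u ∈ A.P1
  · rw [if_pos hP] at hspec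
    obtain ⟨v, hE, hX, hR⟩ := hspec
    refine ⟨v, hE, ⟨k, hR⟩, ?_⟩
    have hle : Tm A lam v (c - wm A lam u v) ≤ k := Tm_le A lam hR
    rcases Nat.eq_zero_or_pos k with rfl | hk1
    · omega
    · by_contra hne
      have hlt : Tm A lam v (c - wm A lam u v) ≤ k - 1 := by omega
      have : Reach A lam (k - 1) v (c - wm A lam u v) :=
        Reach_mono_k A lam hlt (Tm_spec A lam ⟨k, hR⟩)
      apply hnot
      obtain ⟨k', hk'⟩ : ∃ k', k = k' + 1 := ⟨k - 1, by omega⟩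
      rw [hk']
      refine Or.inr ?_
      rw [if_pos hP]
      exact ⟨v, hE, hX, by rw [show k' = k - 1 by omega]; exact this⟩
  · rw [if_neg hP] at hspec
    rcases Nat.eq_zero_or_pos k with rfl | hk1
    · obtain ⟨v, hE⟩ := A.nodeadlock u
      have := hspec v hE
      exact ⟨v, hE, ⟨0, this⟩, by have := Tm_le A lam this; omega⟩
    · obtain ⟨k', hk'⟩ : ∃ k', k = k' + 1 := ⟨k - 1, by omega⟩
      subst hk'
      have : ¬ (∀ v, A.E u v → Reach A lam k' v (c - wm A lam u v)) := by
        intro hall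
        exact hnot (Or.inr (by rw [if_neg hP]; exact hall))
      push_neg at this
      obtain ⟨v, hE, hnR⟩ := this
      refine ⟨v, hE, ⟨k' + 1, hspec v hE⟩, ?_⟩
      have h1 : Tm A lam v (c - wm A lam u v) ≤ k' + 1 := Tm_le A lam (hspec v hE)
      have h2 : ¬ Tm A lam v (c - wm A lam u v) ≤ k' := by
        intro hle
        exact hnR (Reach_mono_k A lam hle (Tm_spec A lam ⟨k' + 1, hspec v hE⟩))
      omega

noncomputable def stSeq (u : V) (c : ℤ) : ℕ → V × ℤ
  | 0 => (u, c)
  | t + 1 =>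
      if h : hasReach A lam (stSeq u c t).1 (stSeq u c t).2 ∧
          1 ≤ Tm A lam (stSeq u c t).1 (stSeq u c t).2 then
        ⟨(exists_next A lam h.1 h.2).choose,
          (stSeq u c t).2 - wm A lam (stSeq u c t).1 (exists_next A lam h.1 h.2).choose⟩
      else stSeq u c t

lemma stSeq_succ_eq {u : V} {c : ℤ} {t : ℕ}
    (hcond : hasReach A lam (stSeq A lam u c t).1 (stSeq A lam u c t).2 ∧
      1 ≤ Tm A lam (stSeq A lam u c t).1 (stSeq A lam u c t).2) :
    stSeq A lam u c (t+1) = ((exists_next A lam hcond.1 hcond.2).choose,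
      (stSeq A lam u c t).2
        - wm A lam (stSeq A lam u c t).1 (exists_next A lam hcond.1 hcond.2).choose) := by
  conv_lhs => rw [stSeq]
  rw [dif_pos hcond]

lemma stSeq_inv1 {u : V} {c : ℤ} (h : hasReach A lam u c) :
    ∀ t ≤ Tm A lam u c,
      hasReach A lam (stSeq A lam u c t).1 (stSeq A lam u c t).2 ∧
      Tm A lam (stSeq A lam u c t).1 (stSeq A lam u c t).2 = Tm A lam u c - t := by
  intro t
  induction t with
  | zero =>
      intro _
      rw [stSeq]
      exact ⟨h, by simp⟩
  | succ t ih =>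
      intro hle
      have ih' := ih (by omega)
      have hcond : hasReach A lam (stSeq A lam u c t).1 (stSeq A lam u c t).2 ∧
          1 ≤ Tm A lam (stSeq A lam u c t).1 (stSeq A lam u c t).2 :=
        ⟨ih'.1, by rw [ih'.2]; omega⟩
      have hspec := (exists_next A lam hcond.1 hcond.2).choose_spec
      rw [stSeq_succ_eq A lam hcond]
      refine ⟨hspec.2.1, ?_⟩
      rw [hspec.2.2, ih'.2]
      omega

lemma stSeq_edge {u : V} {c : ℤ} (h : hasReach A lam u c) :
    ∀ t < Tm A lam u c,
      A.E (stSeq A lam u c t).1 (stSeq A lam u c (t+1)).1 ∧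
      (stSeq A lam u c (t+1)).2
        = (stSeq A lam u c t).2 - wm A lam (stSeq A lam u c t).1 (stSeq A lam u c (t+1)).1 := by
  intro t ht
  have ih' := stSeq_inv1 A lam h t (by omega)
  have hcond : hasReach A lam (stSeq A lam u c t).1 (stSeq A lam u c t).2 ∧
      1 ≤ Tm A lam (stSeq A lam u c t).1 (stSeq A lam u c t).2 :=
    ⟨ih'.1, by rw [ih'.2]; omega⟩
  have hspec := (exists_next A lam hcond.1 hcond.2).choose_spec
  rw [stSeq_succ_eq A lam hcond]
  exact ⟨hspec.1, rfl⟩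

lemma stSeq_zero (u : V) (c : ℤ) : stSeq A lam u c 0 = (u, c) := by rw [stSeq]

/-- the quantitative bound: if the window can be closed at all, it can be
closed within `|V| * (|V| * W)` steps. -/
lemma Tm_le_bound {u : V} {c : ℤ} (h : hasReach A lam u c)
    (hc : c ≤ (A.maxDev lam : ℤ)) :
    Tm A lam u c ≤ Fintype.card V * (Fintype.card V * A.maxDev lam) := by
  classical
  set m := Tm A lam u c with hm
  set W : ℤ := (A.maxDev lam : ℤ) with hW
  have hW0 : 0 ≤ W := by positivity
  set q : ℕ → V × ℤ := stSeq A lam u c with hq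
  -- positivity of deficits along the sequence
  have hpos : ∀ t < m, 1 ≤ (q t).2 := by
    intro t ht
    have := stSeq_inv1 A lam h t (by omega)
    exact one_le_of_Tm_pos A lam this.1 (by rw [this.2]; omega)
  -- strict decrease of deficit on repeated vertices
  have hdec : ∀ t₁ t₂, t₁ < t₂ → t₂ < m → (q t₁).1 = (q t₂).1 → (q t₂).2 < (q t₁).2 := by
    intro t₁ t₂ h12 h2m hv
    by_contra hge
    push_neg at hge
    have hp1 := stSeq_inv1 A lam h t₁ (by omega)
    have hp2 := stSeq_inv1 A lam h t₂ (by omega)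
    have hR : Reach A lam (m - t₂) (q t₂).1 (q t₂).2 := by
      have := Tm_spec A lam hp2.1
      rwa [hp2.2] at this
    have hR1 : Reach A lam (m - t₂) (q t₁).1 (q t₁).2 := by
      rw [hv]
      exact Reach_mono_c A lam hge hR
    have hR2 : Reach A lam (m - t₁ - 1) (q t₁).1 (q t₁).2 :=
      Reach_mono_k A lam (by omega) hR1
    have := Tm_le A lam hR2
    rw [hp1.2] at this
    omega
  -- deficit bounded by W times number of distinct vertices seen so far
  have hbd : ∀ t < m, (q t).2 ≤ W * ((Finset.range (t+1)).image fun i => (q i).1).card := by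
    intro t
    induction t using Nat.strong_induction_on with
    | _ t ihs =>
        intro htm
        cases t with
        | zero =>
            have h0 : (q 0).2 = c := by rw [hq, stSeq_zero]
            rw [h0]
            simp only [zero_add, Finset.range_one, Finset.image_singleton,
              Finset.card_singleton, Nat.cast_one, mul_one]
            exact hc
        | succ t =>
            have hedge := stSeq_edge A lam h t (by omega)
            by_cases hrep : ∃ s, s ≤ t ∧ (q s).1 = (q (t+1)).1
            · obtain ⟨s, hst, hsv⟩ := hrep
              have hlt : (q (t+1)).2 < (q s).2 := hdec s (t+1) (by omega) htm hsv
              have hs := ihs s (by omega) (by omega)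
              have hmono : ((Finset.range (s+1)).image fun i => (q i).1).card
                  ≤ ((Finset.range (t+1+1)).image fun i => (q i).1).card := by
                apply Finset.card_le_card
                apply Finset.image_subset_image
                intro x hx
                simp only [Finset.mem_range] at hx ⊢
                omega
              have := mul_le_mul_of_nonneg_left (Int.ofNat_le.mpr hmono) hW0
              omega
            · push_neg at hrep
              have hnew : (q (t+1)).1 ∉ (Finset.range (t+1)).image fun i => (q i).1 := by
                simp only [Finset.mem_image, Finset.mem_range]
                rintro ⟨s, hs, hsv⟩
                exact hrep s (by omega) hsv
              have hcard : ((Finset.range (t+1+1)).image fun i => (q i).1).card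
                  = ((Finset.range (t+1)).image fun i => (q i).1).card + 1 := by
                rw [Finset.range_add_one, Finset.image_insert,
                  Finset.card_insert_of_notMem hnew]
              have ht' := ihs t (by omega) (by omega)
              have hwm := (edge_wm_bound A lam hedge.1).1
              rw [hedge.2]
              rw [hcard]
              push_cast
              rw [hW] at ht' ⊢
              nlinarith
  -- the states are pairwise distinct, all within a finite box
  have hinj : Set.InjOn q (Finset.range m) := by
    intro t₁ h1 t₂ h2 hqe
    simp only [Finset.coe_range, Set.mem_Iio] at h1 h2
    by_contra hne
    rcases Nat.lt_or_ge t₁ t₂ with hlt | hge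
    · have := hdec t₁ t₂ hlt h2 (by rw [hqe])
      rw [hqe] at this
      omega
    · have hlt : t₂ < t₁ := by omega
      have := hdec t₂ t₁ hlt h1 (by rw [hqe])
      rw [hqe] at this
      omega
  have hmaps : ∀ t ∈ Finset.range m, q t ∈
      Finset.univ ×ˢ Finset.Icc (1 : ℤ) ((Fintype.card V : ℤ) * W) := by
    intro t ht
    simp only [Finset.mem_range] at ht
    simp only [Finset.mem_product, Finset.mem_univ, Finset.mem_Icc, true_and]
    refine ⟨hpos t ht, ?_⟩
    have hb := hbd t ht
    have hcardle : (((Finset.range (t+1)).image fun i => (q i).1).card : ℤ)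
        ≤ (Fintype.card V : ℤ) := by
      exact_mod_cast Finset.card_le_univ _
    nlinarith
  have hcount := Finset.card_le_card_of_injOn q hmaps hinj
  rw [Finset.card_range, Finset.card_product, Finset.card_univ] at hcount
  have hIcc : (Finset.Icc (1 : ℤ) ((Fintype.card V : ℤ) * W)).card
      = Fintype.card V * A.maxDev lam := by
    rw [Int.card_Icc]
    have : (Fintype.card V : ℤ) * W + 1 - 1 = ((Fintype.card V * A.maxDev lam : ℕ) : ℤ) := by
      push_cast [hW]; ring
    rw [this, Int.toNat_natCast]
  rw [hIcc] at hcount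
  exact hcount

end WMP
end Part4

section Part5
variable {V : Type*} [Fintype V] [Nonempty V] (A : ArenaZ V) (lam : ℤ)
namespace WMP

def segStart (π : ℕ → V) : ℕ → ℕ
  | 0 => 0
  | n + 1 => if 0 ≤ adjP A lam π (segStart π n) (n + 1) then n + 1 else segStart π n

lemma segStart_le (π : ℕ → V) : ∀ n, segStart A lam π n ≤ n := by
  intro n
  induction n with
  | zero => rw [segStart]
  | succ n ih =>
      rw [segStart]
      split <;> omega

lemma segStart_congr {π₁ π₂ : ℕ → V} {n : ℕ} (h : ∀ i ≤ n, π₁ i = π₂ i) :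
    ∀ m ≤ n, segStart A lam π₁ m = segStart A lam π₂ m := by
  intro m
  induction m with
  | zero => intro _; rw [segStart, segStart]
  | succ m ih =>
      intro hm
      have ihm := ih (by omega)
      rw [segStart, segStart, ihm,
        adjP_congr A lam (fun i hi => h i (by omega)) (le_refl (m+1))]

noncomputable def fresh (u : V) : V :=
  if h : ∃ v', A.E u v' ∧ v' ∈ X A lam ∧ hasReach A lam v' (-(wm A lam u v')) then h.choose
  else (A.nodeadlock u).choose

noncomputable def mid (u : V) (c : ℤ) : V :=
  if h : ∃ v', A.E u v' ∧ v' ∈ X A lam ∧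
      Reach A lam (Tm A lam u c - 1) v' (c - wm A lam u v') then h.choose
  else (A.nodeadlock u).choose

lemma fresh_edge (u : V) : A.E u (fresh A lam u) := by
  unfold fresh
  split
  · next h => exact h.choose_spec.1
  · exact (A.nodeadlock u).choose_spec

lemma mid_edge (u : V) (c : ℤ) : A.E u (mid A lam u c) := by
  unfold mid
  split
  · next h => exact h.choose_spec.1
  · exact (A.nodeadlock u).choose_spec

noncomputable def stepF (π : ℕ → V) (n : ℕ) : V :=
  if segStart A lam π n = n then fresh A lam (π n)
  else mid A lam (π n) (-(adjP A lam π (segStart A lam π n) n))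

lemma stepF_edge (π : ℕ → V) (n : ℕ) : A.E (π n) (stepF A lam π n) := by
  unfold stepF
  split
  · exact fresh_edge A lam _
  · exact mid_edge A lam _ _

lemma stepF_congr {π₁ π₂ : ℕ → V} {n : ℕ} (h : ∀ i ≤ n, π₁ i = π₂ i) :
    stepF A lam π₁ n = stepF A lam π₂ n := by
  unfold stepF
  rw [segStart_congr A lam h n (le_refl n), h n (le_refl n),
    adjP_congr A lam h (le_refl n)]

noncomputable def finalStrat : A.Strategy :=
  ⟨fun h x => stepF A lam (extFun h x) h.length,
   fun h x hx => by
     have hx' : extFun h x h.length = x := by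
       unfold extFun
       rw [List.getD_eq_default _ _ (le_refl _)]
     have := stepF_edge A lam (extFun h x) h.length
     rwa [hx'] at this⟩

lemma outcome_step {v : V} {π : ℕ → V} (hπ : A.IsOutcome (finalStrat A lam) v π)
    {n : ℕ} (hn : π n ∈ A.P1) : π (n+1) = stepF A lam π n := by
  rw [hπ.2.2 n hn]
  show stepF A lam (extFun (List.ofFn fun i : Fin n => π i) (π n)) _ = _
  have hl : (List.ofFn fun i : Fin n => π i).length = n := by simp
  rw [hl]
  exact stepF_congr A lam (extFun_ofFn π n)

/-- The master invariant for outcomes of the final strategy. -/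
lemma final_inv {v : V} (hv : v ∈ X A lam) {π : ℕ → V}
    (hπ : A.IsOutcome (finalStrat A lam) v π) :
    ∀ n, π n ∈ X A lam ∧
      (segStart A lam π n < n →
        1 ≤ -(adjP A lam π (segStart A lam π n) n) ∧
        hasReach A lam (π n) (-(adjP A lam π (segStart A lam π n) n)) ∧
        Tm A lam (π n) (-(adjP A lam π (segStart A lam π n) n)) + (n - segStart A lam π n)
          ≤ 1 + Fintype.card V * (Fintype.card V * A.maxDev lam)) := by
  intro n
  induction n with
  | zero =>
      refine ⟨by rw [hπ.1]; exact hv, ?_⟩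
      intro habs
      have := segStart_le A lam π 0
      omega
  | succ n ih =>
      set s := segStart A lam π n with hs
      have hsle : s ≤ n := segStart_le A lam π n
      have hseg : segStart A lam π (n+1) = if 0 ≤ adjP A lam π s (n+1) then n + 1 else s := by
        rw [segStart]
      have hstep : adjP A lam π s (n+1) = adjP A lam π s n + wm A lam (π n) (π (n+1)) :=
        adjP_succ A lam π hsle
      -- establish next vertex membership and a (hasReach, deficit) certificate
      have hcert : π (n+1) ∈ X A lam ∧
          (adjP A lam π s (n+1) < 0 →
            hasReach A lam (π (n+1)) (-(adjP A lam π s (n+1))) ∧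
            Tm A lam (π (n+1)) (-(adjP A lam π s (n+1))) + ((n+1) - s)
              ≤ 1 + Fintype.card V * (Fintype.card V * A.maxDev lam)) := by
        rcases Nat.lt_or_ge s n with hmid | hfr
        · -- mid-segment step
          obtain ⟨hc1, hhr, htm⟩ := ih.2 hmid
          have htpos : 1 ≤ Tm A lam (π n) (-(adjP A lam π s n)) := Tm_pos A lam hhr hc1
          obtain ⟨k, hk⟩ : ∃ k, Tm A lam (π n) (-(adjP A lam π s n)) = k + 1 :=
            ⟨Tm A lam (π n) (-(adjP A lam π s n)) - 1, by omega⟩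
          have hR : Reach A lam (k+1) (π n) (-(adjP A lam π s n)) := by
            rw [← hk]; exact Tm_spec A lam hhr
          rcases hR with h0 | hR
          · omega
          by_cases hP : π n ∈ A.P1
          · rw [if_pos hP] at hR
            have hcond : ∃ v', A.E (π n) v' ∧ v' ∈ X A lam ∧
                Reach A lam (Tm A lam (π n) (-(adjP A lam π s n)) - 1) v'
                  ((-(adjP A lam π s n)) - wm A lam (π n) v') := by
              obtain ⟨v', hE, hX', hR'⟩ := hR
              exact ⟨v', hE, hX', by rw [hk]; simpa using hR'⟩
            have hnx : π (n+1) = mid A lam (π n) (-(adjP A lam π s n)) := by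
              rw [outcome_step A lam hπ hP, stepF, if_neg (by omega), ← hs]
            rw [hnx, mid, dif_pos hcond]
            have hspec := hcond.choose_spec
            refine ⟨hspec.2.1, ?_⟩
            intro hopen
            have he : -(adjP A lam π s (n+1))
                = (-(adjP A lam π s n)) - wm A lam (π n) hcond.choose := by
              rw [hstep, hnx, mid, dif_pos hcond]; ring
            rw [he]
            have hR' := hspec.2.2
            refine ⟨⟨Tm A lam (π n) (-(adjP A lam π s n)) - 1, hR'⟩, ?_⟩
            have h2 := Tm_le A lam hR'
            omega
          · -- adversarial vertex
            rw [if_neg hP] at hR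
            have hE : A.E (π n) (π (n+1)) := hπ.2.1 n
            have hR' := hR (π (n+1)) hE
            refine ⟨succ_mem_X A lam ih.1 hP hE, ?_⟩
            intro hopen
            have he : -(adjP A lam π s (n+1))
                = (-(adjP A lam π s n)) - wm A lam (π n) (π (n+1)) := by
              rw [hstep]; ring
            rw [he]
            refine ⟨⟨k, hR'⟩, ?_⟩
            have := Tm_le A lam hR'
            omega
        · -- fresh position: s = n
          have hsn : s = n := by omega
          have hadj0 : adjP A lam π s n = 0 := by
            rw [hsn]; simp [adjP]
          have hwm : -(adjP A lam π s (n+1)) = -(wm A lam (π n) (π (n+1))) := by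
            rw [hstep, hadj0]; ring
          have hget : π (n+1) ∈ X A lam ∧
              hasReach A lam (π (n+1)) (-(wm A lam (π n) (π (n+1)))) := by
            by_cases hP : π n ∈ A.P1
            · have hcond : ∃ v', A.E (π n) v' ∧ v' ∈ X A lam ∧
                  hasReach A lam v' (-(wm A lam (π n) v')) := comp1 A lam ih.1 hP
              have hnx : π (n+1) = fresh A lam (π n) := by
                rw [outcome_step A lam hπ hP, stepF, if_pos (by omega)]
              rw [hnx, fresh, dif_pos hcond]
              exact ⟨hcond.choose_spec.2.1, hcond.choose_spec.2.2⟩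
            · have hE : A.E (π n) (π (n+1)) := hπ.2.1 n
              exact ⟨(comp2 A lam ih.1 hP hE).1, (comp2 A lam ih.1 hP hE).2⟩
          refine ⟨hget.1, ?_⟩
          intro hopen
          rw [hwm]
          refine ⟨hget.2, ?_⟩
          have hc1 : 1 ≤ -(wm A lam (π n) (π (n+1))) := by omega
          have hcW : -(wm A lam (π n) (π (n+1))) ≤ (A.maxDev lam : ℤ) := by
            have := (edge_wm_bound A lam (hπ.2.1 n)).1
            omega
          have := Tm_le_bound A lam hget.2 hcW
          omega
      -- assemble
      refine ⟨hcert.1, ?_⟩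
      intro hlt
      have hne : segStart A lam π (n+1) ≠ n + 1 := by omega
      rw [hseg] at hne ⊢
      have hopen : ¬ (0 ≤ adjP A lam π s (n+1)) := fun hcl => hne (by rw [if_pos hcl])
      rw [if_neg hopen]
      push_neg at hopen
      obtain ⟨hhr, htm⟩ := hcert.2 hopen
      exact ⟨by omega, hhr, htm⟩

theorem main_forward {v : V} (hv : v ∈ X A lam) :
    A.SureWins
      {π : ℕ → V | A.DirFWMP (Fintype.card V * (Fintype.card V * A.maxDev lam + 1)) lam π} v := by
  refine ⟨finalStrat A lam, fun π hπ => ?_⟩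
  have hinv := final_inv A lam hv hπ
  have hcard : 1 ≤ Fintype.card V := Fintype.card_pos
  set N := Fintype.card V * (Fintype.card V * A.maxDev lam) with hN
  have hL : Fintype.card V * (Fintype.card V * A.maxDev lam + 1) = N + Fintype.card V := by
    rw [hN]; ring
  intro i
  set s := segStart A lam π i with hsi
  have hsle : s ≤ i := segStart_le A lam π i
  -- segment start stays `s` until a boundary is reached
  have hconst : ∀ m, (∀ j, 1 ≤ j → j ≤ m → segStart A lam π (i + j) ≠ i + j) →
      segStart A lam π (i + m) = s := by
    intro m
    induction m with
    | zero => intro _; rfl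
    | succ m ih =>
        intro hno
        have hm := ih (fun j h1 h2 => hno j h1 (by omega))
        have := hno (m+1) (by omega) (le_refl _)
        rw [show i + (m+1) = (i + m) + 1 by omega] at this ⊢
        rw [segStart] at this ⊢
        rw [hm] at this ⊢
        split at this
        · omega
        · next h => rw [if_neg h]
  -- a boundary must occur within N + card steps
  have hbound : ∃ b, 1 ≤ b ∧ b ≤ N + Fintype.card V ∧
      segStart A lam π (i + b) = i + b := by
    by_contra hno
    push_neg at hno
    have hallne : ∀ j, 1 ≤ j → j ≤ N + Fintype.card V →
        segStart A lam π (i + j) ≠ i + j := by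
      intro j h1 h2 he
      exact absurd he (hno j h1 h2)
    have hcst := hconst (N + Fintype.card V) hallne
    have hlt : segStart A lam π (i + (N + Fintype.card V)) < i + (N + Fintype.card V) := by
      rw [hcst]; omega
    obtain ⟨hc1, hhr, htm⟩ := (hinv (i + (N + Fintype.card V))).2 hlt
    rw [hcst] at htm
    have htpos : 1 ≤ Tm A lam (π (i + (N + Fintype.card V)))
        (-(adjP A lam π (segStart A lam π (i + (N + Fintype.card V)))
          (i + (N + Fintype.card V)))) := by
      apply Tm_pos A lam hhr
      rw [hcst] at hc1 ⊢
      exact hc1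
    rw [hcst] at htpos
    omega
  -- take the least boundary
  have hex : ∃ b, (1 ≤ b ∧ segStart A lam π (i + b) = i + b) := by
    obtain ⟨b, h1, _, h3⟩ := hbound
    exact ⟨b, h1, h3⟩
  set d := Nat.find hex with hd
  obtain ⟨hd1, hdseg⟩ := Nat.find_spec hex
  have hdle : d ≤ N + Fintype.card V := by
    obtain ⟨b, h1, h2, h3⟩ := hbound
    exact le_trans (Nat.find_le ⟨h1, h3⟩) h2
  -- before the boundary, segStart is constant `s`
  have hprev : segStart A lam π (i + (d - 1)) = s := by
    apply hconst
    intro j h1 h2 he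
    have := Nat.find_min hex (m := j) (by omega)
    push_neg at this
    exact absurd he (this h1)
  -- boundary closes the window starting at `s`
  have hclose : 0 ≤ adjP A lam π s (i + d) := by
    have : segStart A lam π ((i + (d-1)) + 1) = (i + (d-1)) + 1 := by
      rw [show (i + (d-1)) + 1 = i + d by omega]
      exact hdseg
    rw [segStart, hprev] at this
    by_contra hneg
    push_neg at hneg
    rw [if_neg (by rw [show (i + (d-1)) + 1 = i + d by omega]; omega)] at this
    omega
  -- the window starting at `i` also closes at `i + d`
  have hsplit : adjP A lam π s (i + d) = adjP A lam π s i + adjP A lam π i (i + d) := by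
    unfold adjP
    rw [← Finset.sum_Ico_consecutive _ hsle (by omega : i ≤ i + d)]
  have hισ : 0 ≤ adjP A lam π i (i + d) := by
    rcases Nat.lt_or_ge s i with hlt | hge
    · obtain ⟨hc1, _, _⟩ := (hinv i).2 (by omega)
      rw [← hsi] at hc1
      omega
    · have : s = i := by omega
      rw [this] at hsplit
      have h0 : adjP A lam π i i = 0 := by simp [adjP]
      rw [this] at hclose
      omega
  refine ⟨d, hd1, by rw [hL] at *; omega, ?_⟩
  have := adjP_eq A lam π i d
  omega

end WMP
end Part5


/-- With `W_λ = max_{e ∈ E} |w(e) − λ|` and `ℓ' = |V|·(|V|·W_λ + 1)`, for every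
vertex `v`, Player 1 sure-wins `DirBWMP(λ)` from `v` if and only if Player 1
sure-wins `DirFWMP(ℓ', λ)` from `v`. -/
theorem sure_dirbwmp_iff_sure_dirfwmp
    {V : Type*} [Fintype V] [Nonempty V] (A : ArenaZ V) (lam : ℤ) (v : V) :
    A.SureWins {π : ℕ → V | A.DirBWMP lam π} v ↔
    A.SureWins
      {π : ℕ → V | A.DirFWMP (Fintype.card V * (Fintype.card V * A.maxDev lam + 1)) lam π} v := by
  constructor
  · intro hv
    exact WMP.main_forward A lam hv
  · rintro ⟨σ, hσ⟩
    refine ⟨σ, fun π hπ => ?_⟩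
    have hpos : 1 ≤ Fintype.card V * (Fintype.card V * A.maxDev lam + 1) :=
      Nat.one_le_iff_ne_zero.mpr
        (Nat.mul_ne_zero (Nat.pos_iff_ne_zero.mp Fintype.card_pos) (Nat.succ_ne_zero _))
    exact ⟨_, hpos, hσ π hπ⟩
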